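/- For every t ∈ [T] and every x ∈ ℝ^d, the squared norm of the diffused GMM score obeys ‖s_t^{⋆GMM}(x)‖₂² ≤ −(2/(1−ᾱ_t)) · log( (2π(1−ᾱ_t))^{d/2} · p_{X_t^GMM}(x) ). -/

import Mathlib

open MeasureTheory Real Finset
open scoped RealInnerProductSpace BigOperators

noncomputable section

/-- Density of the Gaussian distribution `N(m, v I_d)` on `ℝ^d`. -/
def gaussV (d : ℕ) (v : ℝ) (m x : EuclideanSpace ℝ (Fin d)) : ℝ :=
  (2 * Real.pi * v) ^ (-(d : ℝ) / 2) * Real.exp (-‖x - m‖ ^ 2 / (2 * v))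

/-- Density of the Gaussian mixture `∑_k w_k N(√abar μ_k, I_d)`. -/
def mixDensity (d K : ℕ) (w : Fin K → ℝ) (μ : Fin K → EuclideanSpace ℝ (Fin d))
    (abar : ℝ) (x : EuclideanSpace ℝ (Fin d)) : ℝ :=
  ∑ k, w k * gaussV d 1 (Real.sqrt abar • μ k) x

/-- Posterior component weights `π_k^{(t)}(x)`. -/
def postWeight (d K : ℕ) (w : Fin K → ℝ) (μ : Fin K → EuclideanSpace ℝ (Fin d))
    (abar : ℝ) (k : Fin K) (x : EuclideanSpace ℝ (Fin d)) : ℝ :=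
  w k * Real.exp (-‖x - Real.sqrt abar • μ k‖ ^ 2 / 2) /
    ∑ i, w i * Real.exp (-‖x - Real.sqrt abar • μ i‖ ^ 2 / 2)

/-- Closed form of the score `∇ log p_{X_t^GMM}` of the diffused GMM. -/
def gmmScore (d K : ℕ) (w : Fin K → ℝ) (μ : Fin K → EuclideanSpace ℝ (Fin d))
    (abar : ℝ) (x : EuclideanSpace ℝ (Fin d)) : EuclideanSpace ℝ (Fin d) :=
  -x + Real.sqrt abar • ∑ k, postWeight d K w μ abar k x • μ k

/-- The Jacobian matrix `J_t(x)` of the diffused GMM score. -/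
def gmmJac (d K : ℕ) (w : Fin K → ℝ) (μ : Fin K → EuclideanSpace ℝ (Fin d))
    (abar : ℝ) (x : EuclideanSpace ℝ (Fin d)) : Matrix (Fin d) (Fin d) ℝ :=
  Matrix.of fun i j =>
    (if i = j then (-1 : ℝ) else 0) +
      abar * ((∑ k, postWeight d K w μ abar k x * (μ k i * μ k j)) -
        (∑ k, postWeight d K w μ abar k x * μ k i) *
          (∑ k, postWeight d K w μ abar k x * μ k j))

/-- The quantity `ζ_k^{(t)}(x)`, where `abar` plays the role of `ᾱ_t` and `a` that of `α_t`. -/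
def zeta (d K : ℕ) (w : Fin K → ℝ) (μ : Fin K → EuclideanSpace ℝ (Fin d))
    (abar a : ℝ) (k : Fin K) (x : EuclideanSpace ℝ (Fin d)) : ℝ :=
  (1 - a ^ 2) / (2 * a ^ 2) *
      (‖x - Real.sqrt abar • μ k‖ ^ 2 -
        ∑ i, postWeight d K w μ abar i x * ‖x - Real.sqrt abar • μ i‖ ^ 2) +
    (1 - a) / a ^ 2 *
      ⟪gmmScore d K w μ abar x,
        ∑ i, postWeight d K w μ abar i x • (Real.sqrt abar • (μ i - μ k))⟫

/-- The typical set `E_t`. -/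
def Eset (d K T : ℕ) (w : Fin K → ℝ) (μ : Fin K → EuclideanSpace ℝ (Fin d))
    (abar a C₁ C₂ : ℝ) : Set (EuclideanSpace ℝ (Fin d)) :=
  {x | Matrix.trace (1 + gmmJac d K w μ abar x) ≤ C₁ * Real.log ((K : ℝ) * T) ∧
    ∑ k, postWeight d K w μ abar k x * Real.exp (-(zeta d K w μ abar a k x)) ≤
      Real.exp (C₂ * (1 - a) ^ 2 * Real.log ((K : ℝ) * T) ^ 2)}

/-- The set `A_t`. -/
def Aset (d K T : ℕ) (w : Fin K → ℝ) (μ : Fin K → EuclideanSpace ℝ (Fin d))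
    (abar cR C₇ : ℝ) : Set (EuclideanSpace ℝ (Fin d)) :=
  {x | -(C₇ * d * Real.log ((d : ℝ) * T)) ≤ Real.log (mixDensity d K w μ abar x) ∧
    ‖x‖ ≤ Real.sqrt (2 * (T : ℝ) ^ (2 * cR) + 16 * d * Real.log T)}

/-- The set `T_k`. -/
def Tset (d K T : ℕ) (μ : Fin K → EuclideanSpace ℝ (Fin d))
    (abar C₅ : ℝ) (k : Fin K) : Set (EuclideanSpace ℝ (Fin d)) :=
  {x | ∀ i : Fin K,
    |⟪x - Real.sqrt abar • μ k, Real.sqrt abar • (μ i - μ k)⟫| ≤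
      C₅ * Real.sqrt (abar * Real.log ((K : ℝ) * T)) * ‖μ i - μ k‖}

/-- Forward (diffused) marginal density at noise level `abar`, starting from density `f₀`. -/
def fwdDensity (d : ℕ) (f₀ : EuclideanSpace ℝ (Fin d) → ℝ) (abar : ℝ)
    (x : EuclideanSpace ℝ (Fin d)) : ℝ :=
  ∫ y, gaussV d (1 - abar) (Real.sqrt abar • y) x * f₀ y

/-- Stein score of a density `p`. -/
def scoreOf (d : ℕ) (p : EuclideanSpace ℝ (Fin d) → ℝ)
    (x : EuclideanSpace ℝ (Fin d)) : EuclideanSpace ℝ (Fin d) :=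
  gradient (fun y => Real.log (p y)) x

/-- Truncation (clipping) of a score estimate at radius `R`. -/
def clipFn (d : ℕ) (R : ℝ) (s : EuclideanSpace ℝ (Fin d) → EuclideanSpace ℝ (Fin d))
    (x : EuclideanSpace ℝ (Fin d)) : EuclideanSpace ℝ (Fin d) :=
  if ‖s x‖ ≤ R then s x else 0

/-- Total-variation distance between two densities on `ℝ^d`. -/
def tvDist (d : ℕ) (p q : EuclideanSpace ℝ (Fin d) → ℝ) : ℝ :=
  (1 / 2) * ∫ x, |p x - q x|

/-- Density of the one-step (DDPM-type) reverse Gaussian transition with rate `a`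
and drift field `s`, from `y` to `x`. -/
def ddpmKernel (d : ℕ) (a : ℝ) (s : EuclideanSpace ℝ (Fin d) → EuclideanSpace ℝ (Fin d))
    (y x : EuclideanSpace ℝ (Fin d)) : ℝ :=
  gaussV d (1 - a) ((Real.sqrt a)⁻¹ • (y + (1 - a) • s y)) x

/-- Density of `Y_{T-n}` for the DDPM sampler run with rates `α` and score estimates `s`. -/
def ddpmDensity (d T : ℕ) (α : ℕ → ℝ)
    (s : ℕ → EuclideanSpace ℝ (Fin d) → EuclideanSpace ℝ (Fin d)) :
    ℕ → EuclideanSpace ℝ (Fin d) → ℝ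
  | 0 => gaussV d 1 0
  | n + 1 => fun x =>
      ∫ y, ddpmKernel d (α (T - n)) (s (T - n)) y x * ddpmDensity d T α s n y

/-- Density (on `ℝ^d`) of `Ȳ_{T-n}^-` for the auxiliary reverse process. -/
def pbarMinus (d K T : ℕ) (w : Fin K → ℝ) (μ : Fin K → EuclideanSpace ℝ (Fin d))
    (αbar α : ℕ → ℝ) (C₁ C₂ : ℝ) : ℕ → EuclideanSpace ℝ (Fin d) → ℝ
  | 0 => (Eset d K T w μ (αbar T) (α T) C₁ C₂).indicator (gaussV d 1 0)
  | n + 1 =>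
      (Eset d K T w μ (αbar (T - n)) (α (T - n)) C₁ C₂).indicator fun x =>
        ∫ y in Eset d K T w μ (αbar (T - n)) (α (T - n)) C₁ C₂,
          ddpmKernel d (α (T - n)) (gmmScore d K w μ (αbar (T - n))) y x *
            min (mixDensity d K w μ (αbar (T - n)) y)
              (pbarMinus d K T w μ αbar α C₁ C₂ n y)

/-- The function `Δ_t(x) = p_{X_t^GMM}(x) - p_{Ȳ_t}(x)`. -/
def DeltaFn (d K T : ℕ) (w : Fin K → ℝ) (μ : Fin K → EuclideanSpace ℝ (Fin d))
    (αbar α : ℕ → ℝ) (C₁ C₂ : ℝ) (t : ℕ) (x : EuclideanSpace ℝ (Fin d)) : ℝ :=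
  mixDensity d K w μ (αbar t) x -
    min (mixDensity d K w μ (αbar t) x) (pbarMinus d K T w μ αbar α C₁ C₂ (T - t) x)

end

/-- For every noise level `ᾱ_t ∈ (0,1)` and every `x ∈ ℝ^d`, the squared
norm of the diffused-GMM score obeys
`‖s_t^{⋆GMM}(x)‖² ≤ −(2/(1−ᾱ_t)) log((2π(1−ᾱ_t))^{d/2} p_{X_t^GMM}(x))`. -/
theorem stmt17 (d K T : ℕ) (hd : 1 ≤ d) (hK : 1 ≤ K) (hT : 1 ≤ T)
    (w : Fin K → ℝ) (μ : Fin K → EuclideanSpace ℝ (Fin d))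
    (hw : ∀ k, w k ∈ Set.Ioo (0 : ℝ) 1) (hsum : ∑ k, w k = 1)
    (αbar : ℕ → ℝ) (hαbar : ∀ s, αbar s ∈ Set.Ioo (0 : ℝ) 1)
    (t : ℕ) (ht1 : 1 ≤ t) (htT : t ≤ T) (x : EuclideanSpace ℝ (Fin d)) :
    ‖gmmScore d K w μ (αbar t) x‖ ^ 2 ≤
      -(2 / (1 - αbar t)) *
        Real.log ((2 * Real.pi * (1 - αbar t)) ^ ((d : ℝ) / 2) *
          mixDensity d K w μ (αbar t) x) := by
  obtain ⟨ha0, ha1⟩ := hαbar t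
  set a := αbar t with ha
  haveI : Nonempty (Fin K) := Fin.pos_iff_nonempty.mp (by omega)
  have hne : (Finset.univ : Finset (Fin K)).Nonempty := Finset.univ_nonempty
  set e : Fin K → ℝ := fun k => Real.exp (-‖x - Real.sqrt a • μ k‖ ^ 2 / 2) with he
  have hepos : ∀ k, 0 < e k := fun k => Real.exp_pos _
  have hele1 : ∀ k, e k ≤ 1 := by
    intro k
    apply Real.exp_le_one_iff.2
    have : (0:ℝ) ≤ ‖x - Real.sqrt a • μ k‖ ^ 2 := sq_nonneg _
    linarith
  set Z : ℝ := ∑ k, w k * e k with hZ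
  have hZpos : 0 < Z := Finset.sum_pos (fun k _ => mul_pos (hw k).1 (hepos k)) hne
  have hZle1 : Z ≤ 1 := by
    calc Z ≤ ∑ k, w k := Finset.sum_le_sum fun k _ => by
            nlinarith [(hw k).1, hele1 k, hepos k]
      _ = 1 := hsum
  set pp : Fin K → ℝ := fun k => w k * e k / Z with hpp
  have hpppos : ∀ k, 0 < pp k := fun k => div_pos (mul_pos (hw k).1 (hepos k)) hZpos
  have hppsum : ∑ k, pp k = 1 := by
    simp only [hpp]
    rw [← Finset.sum_div, ← hZ, div_self hZpos.ne']
  have hpw : ∀ k, postWeight d K w μ a k x = pp k := fun k => rfl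
  -- score as convex combination
  have hscore : gmmScore d K w μ a x = ∑ k, pp k • (Real.sqrt a • μ k - x) := by
    have : ∑ k, pp k • (Real.sqrt a • μ k - x)
        = Real.sqrt a • ∑ k, pp k • μ k - (∑ k, pp k) • x := by
      rw [Finset.smul_sum, Finset.sum_smul]
      rw [← Finset.sum_sub_distrib]
      congr 1; ext k
      rw [smul_sub, smul_comm]
    rw [this, hppsum, one_smul, gmmScore]
    simp only [hpw]
    abel
  set r : Fin K → ℝ := fun k => ‖x - Real.sqrt a • μ k‖ with hr
  -- Jensen: ‖score‖² ≤ ∑ π r²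
  have hscore_le : ‖gmmScore d K w μ a x‖ ^ 2 ≤ ∑ k, pp k * r k ^ 2 := by
    have h1 : ‖gmmScore d K w μ a x‖ ≤ ∑ k, pp k * r k := by
      rw [hscore]
      refine (norm_sum_le _ _).trans (le_of_eq ?_)
      refine Finset.sum_congr rfl fun k _ => ?_
      rw [norm_smul, Real.norm_of_nonneg (hpppos k).le, hr]
      simp [norm_sub_rev]
    have h2 : (∑ k, pp k * r k) ^ 2 ≤ (∑ k, pp k) * ∑ k, pp k * r k ^ 2 := by
      apply Finset.sum_sq_le_sum_mul_sum_of_sq_eq_mul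
      · exact fun k _ => (hpppos k).le
      · exact fun k _ => mul_nonneg (hpppos k).le (sq_nonneg _)
      · intro k _; ring
    rw [hppsum, one_mul] at h2
    calc ‖gmmScore d K w μ a x‖ ^ 2 ≤ (∑ k, pp k * r k) ^ 2 := by
          apply sq_le_sq' _ h1
          have : (0:ℝ) ≤ ∑ k, pp k * r k :=
            Finset.sum_nonneg fun k _ => mul_nonneg (hpppos k).le (norm_nonneg _)
          linarith [norm_nonneg (gmmScore d K w μ a x)]
      _ ≤ _ := h2
  -- Gibbs: ∑ π r² ≤ -2 log Z
  have hgibbs : ∑ k, pp k * r k ^ 2 ≤ -2 * Real.log Z := by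
    have key : ∀ k, pp k * (r k ^ 2 / 2) + pp k * Real.log Z ≤ w k - pp k := by
      intro k
      have hlogek : Real.log (e k) = -(r k ^ 2) / 2 := Real.log_exp _
      have hratio : w k / pp k = Z / e k := by
        rw [div_eq_div_iff (hpppos k).ne' (hepos k).ne', hpp]
        field_simp
      have hlog : Real.log (w k / pp k) = Real.log Z + r k ^ 2 / 2 := by
        rw [hratio, Real.log_div hZpos.ne' (hepos k).ne', hlogek]; ring
      have hle : Real.log (w k / pp k) ≤ w k / pp k - 1 :=
        Real.log_le_sub_one_of_pos (div_pos (hw k).1 (hpppos k))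
      have := mul_le_mul_of_nonneg_left hle (hpppos k).le
      rw [hlog, mul_sub, mul_div_cancel₀ _ (hpppos k).ne'] at this
      linarith
    have hsum' := Finset.sum_le_sum (s := Finset.univ) (fun k _ => key k)
    rw [Finset.sum_add_distrib, ← Finset.sum_mul, hppsum, one_mul,
      Finset.sum_sub_distrib, hsum, hppsum] at hsum'
    have : ∑ k, pp k * (r k ^ 2 / 2) = (∑ k, pp k * r k ^ 2) / 2 := by
      rw [Finset.sum_div]
      exact Finset.sum_congr rfl fun k _ => by ring
    rw [this] at hsum'
    linarith
  -- mixDensity = (2π)^{-d/2} * Z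
  have hpppos2 : (0:ℝ) < 2 * Real.pi := by positivity
  have hmix : mixDensity d K w μ a x = (2 * Real.pi) ^ (-(d:ℝ)/2) * Z := by
    rw [mixDensity, hZ, Finset.mul_sum]
    refine Finset.sum_congr rfl fun k _ => ?_
    rw [gaussV, he]
    simp only [mul_one]
    ring
  have harg : (2 * Real.pi * (1 - a)) ^ ((d:ℝ)/2) * mixDensity d K w μ a x
      = (1 - a) ^ ((d:ℝ)/2) * Z := by
    rw [hmix, Real.mul_rpow hpppos2.le (by linarith)]
    rw [show -(d:ℝ)/2 = -((d:ℝ)/2) by ring, Real.rpow_neg hpppos2.le]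
    field_simp
  rw [harg, Real.log_mul (Real.rpow_pos_of_pos (by linarith) _).ne' hZpos.ne',
    Real.log_rpow (by linarith)]
  have hlZ : Real.log Z ≤ 0 := Real.log_nonpos hZpos.le hZle1
  have hl1a : Real.log (1 - a) ≤ 0 := Real.log_nonpos (by linarith) (by linarith)
  have h1a : (0:ℝ) < 1 - a := by linarith
  have hu : (2:ℝ) ≤ 2 / (1 - a) := by
    rw [le_div_iff₀ h1a]; nlinarith
  have hdnn : (0:ℝ) ≤ (d:ℝ)/2 := by positivity
  calc ‖gmmScore d K w μ a x‖ ^ 2 ≤ -2 * Real.log Z := hscore_le.trans hgibbs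
    _ ≤ -(2 / (1 - a)) * ((d:ℝ)/2 * Real.log (1 - a) + Real.log Z) := by
        nlinarith [mul_nonneg hdnn (neg_nonneg.2 hl1a), div_pos (by norm_num : (0:ℝ)<2) h1a]
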